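/- Let F be a number field, 𝔮 = 2O_F with 2 inert in F, S = {𝔮}, and suppose (λ, μ) is an S-unit solution of λ + μ = 1 with ord_𝔮(λ) = n ≥ 2, ord_𝔮(μ) = 0, and μ = δ² for a unit δ. With λ₁ = 1 + δ, λ₂ = 1 - δ, the pair (λ', μ') = (λ₁²/(4δ), -λ₂²/(4δ)) is a solution to the S-unit equation λ' + μ' = 1, and if ord_𝔮(λ₁) = n-1, ord_𝔮(λ₂) = 1, then max{|ord_𝔮(λ')|, |ord_𝔮(μ')|} = 2n - 4. -/

import Mathlib

open NumberField IsDedekindDomain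
open scoped Multiplicative
local notation "ℤₘ₀" => WithZero (Multiplicative ℤ)

/-- The additive `𝔮`-adic valuation `ord_𝔮(x) ∈ ℤ` of a nonzero element `x` of a number
field `F`, at the height-one prime `𝔮` of `O_F` (junk value `0` at `x = 0`). -/
noncomputable def ordAt {F : Type*} [Field F] [NumberField F]
    (v : HeightOneSpectrum (𝓞 F)) (x : F) : ℤ :=
  if h : v.valuation F x = 0 then 0 else -Multiplicative.toAdd (WithZero.unzero h)

lemma ordAt_spec {F : Type*} [Field F] [NumberField F] (v : HeightOneSpectrum (𝓞 F))
    {x : F} (hx : v.valuation F x ≠ 0) :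
    v.valuation F x = ((Multiplicative.ofAdd (-(ordAt v x)) : Multiplicative ℤ) : ℤₘ₀) := by
  rw [ordAt, dif_neg hx, neg_neg, ofAdd_toAdd, WithZero.coe_unzero]

lemma ordAt_eq_of_val {F : Type*} [Field F] [NumberField F] (v : HeightOneSpectrum (𝓞 F))
    {x : F} {m : ℤ}
    (h : v.valuation F x = ((Multiplicative.ofAdd (-m) : Multiplicative ℤ) : ℤₘ₀)) :
    ordAt v x = m := by
  have hx : v.valuation F x ≠ 0 := by rw [h]; exact WithZero.coe_ne_zero
  have := (ordAt_spec v hx).symm.trans h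
  rw [WithZero.coe_inj] at this
  have := Multiplicative.ofAdd.injective this
  omega

lemma val_algebraMap_unit {F : Type*} [Field F] [NumberField F]
    (w : HeightOneSpectrum (𝓞 F)) (u : (𝓞 F)ˣ) :
    w.valuation F (algebraMap (𝓞 F) F (u : 𝓞 F)) = 1 := by
  have h1 : w.valuation F (algebraMap (𝓞 F) F (u : 𝓞 F)) *
      w.valuation F (algebraMap (𝓞 F) F ((u⁻¹ : (𝓞 F)ˣ) : 𝓞 F)) = 1 := by
    rw [← Valuation.map_mul, ← map_mul, ← Units.val_mul, mul_inv_cancel, Units.val_one,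
      map_one, Valuation.map_one]
  refine le_antisymm (w.valuation_le_one _) ?_
  calc (1 : ℤₘ₀) = _ * _ := h1.symm
    _ ≤ w.valuation F (algebraMap (𝓞 F) F (u : 𝓞 F)) * 1 :=
        mul_le_mul_right (w.valuation_le_one _) _
    _ = _ := mul_one _

lemma eq_one_of_mul_eq_one {a b : ℤₘ₀} (ha : a ≤ 1) (hb : b ≤ 1) (hab : a * b = 1) :
    a = 1 := by
  refine le_antisymm ha ?_
  calc (1 : ℤₘ₀) = a * b := hab.symm
    _ ≤ a * 1 := mul_le_mul_right hb _
    _ = a := mul_one a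

/-- Let `F` be a number field, `𝔮 = 2O_F` with `2` inert in `F`, `S = {𝔮}`, and suppose
`(λ, μ)` is an `S`-unit solution of `λ + μ = 1` with `ord_𝔮(λ) = n ≥ 2`, `ord_𝔮(μ) = 0`
and `μ = δ²` for a unit `δ`. With `λ₁ = 1 + δ`, `λ₂ = 1 - δ`, the pair
`(λ', μ') = (λ₁²/(4δ), -λ₂²/(4δ))` is a solution of the `S`-unit equation `λ' + μ' = 1`,
and if `ord_𝔮(λ₁) = n - 1` and `ord_𝔮(λ₂) = 1` then
`max(|ord_𝔮(λ')|, |ord_𝔮(μ')|) = 2n - 4`. -/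
theorem sunit_descent_new_solution (F : Type*) [Field F] [NumberField F]
    (v : HeightOneSpectrum (𝓞 F)) (h2 : v.asIdeal = Ideal.span {(2 : 𝓞 F)})
    (lam mu : F) (hint : ∃ a : 𝓞 F, algebraMap (𝓞 F) F a = lam)
    (hsum : lam + mu = 1)
    (hlamS : ∀ w : HeightOneSpectrum (𝓞 F), w ≠ v → w.valuation F lam = 1)
    (hmuS : ∀ w : HeightOneSpectrum (𝓞 F), w ≠ v → w.valuation F mu = 1)
    (n : ℕ) (hn : 2 ≤ n) (hlamn : ordAt v lam = n) (hmu0 : ordAt v mu = 0)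
    (δ : (𝓞 F)ˣ) (hδ : mu = algebraMap (𝓞 F) F (δ : 𝓞 F) ^ 2)
    (lam₁ lam₂ : F) (hlam₁ : lam₁ = 1 + algebraMap (𝓞 F) F (δ : 𝓞 F))
    (hlam₂ : lam₂ = 1 - algebraMap (𝓞 F) F (δ : 𝓞 F))
    (hord₁ : ordAt v lam₁ = (n : ℤ) - 1) (hord₂ : ordAt v lam₂ = 1) :
    lam₁ ^ 2 / (4 * algebraMap (𝓞 F) F (δ : 𝓞 F)) +
      -(lam₂ ^ 2) / (4 * algebraMap (𝓞 F) F (δ : 𝓞 F)) = 1 ∧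
    (∀ w : HeightOneSpectrum (𝓞 F), w ≠ v →
      w.valuation F (lam₁ ^ 2 / (4 * algebraMap (𝓞 F) F (δ : 𝓞 F))) = 1 ∧
      w.valuation F (-(lam₂ ^ 2) / (4 * algebraMap (𝓞 F) F (δ : 𝓞 F))) = 1) ∧
    max |ordAt v (lam₁ ^ 2 / (4 * algebraMap (𝓞 F) F (δ : 𝓞 F)))|
        |ordAt v (-(lam₂ ^ 2) / (4 * algebraMap (𝓞 F) F (δ : 𝓞 F)))| =
      2 * (n : ℤ) - 4 := by
  set d : F := algebraMap (𝓞 F) F (δ : 𝓞 F) with hd_def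
  have hd0 : d ≠ 0 := ((δ.isUnit).map (algebraMap (𝓞 F) F)).ne_zero
  have h40 : (4 : F) ≠ 0 := by norm_num
  -- the sum
  have hsum' : lam₁ ^ 2 / (4 * d) + -(lam₂ ^ 2) / (4 * d) = 1 := by
    rw [hlam₁, hlam₂]
    field_simp
    ring
  -- lam₁ * lam₂ = lam
  have hlam_eq : lam₁ * lam₂ = lam := by
    have : lam = 1 - mu := eq_sub_of_add_eq hsum
    rw [hlam₁, hlam₂, this, hδ]; ring
  have h2ne : (2 : 𝓞 F) ≠ 0 := by norm_num
  have h4F : (4 : F) = algebraMap (𝓞 F) F 2 * algebraMap (𝓞 F) F 2 := by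
    rw [map_ofNat]; norm_num
  -- valuations away from v
  have hpart2 : ∀ w : HeightOneSpectrum (𝓞 F), w ≠ v →
      w.valuation F (lam₁ ^ 2 / (4 * d)) = 1 ∧
      w.valuation F (-(lam₂ ^ 2) / (4 * d)) = 1 := by
    intro w hw
    have hw2 : w.valuation F (algebraMap (𝓞 F) F 2) = 1 := by
      refine le_antisymm (w.valuation_le_one _) (not_lt.mp ?_)
      intro hlt
      rw [w.valuation_lt_one_iff_dvd, ← h2, Ideal.dvd_iff_le] at hlt
      have hvmax : v.asIdeal.IsMaximal := Ideal.IsPrime.isMaximal v.isPrime v.ne_bot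
      exact hw (HeightOneSpectrum.ext (hvmax.eq_of_le w.isPrime.ne_top hlt).symm)
    have hwd : w.valuation F d = 1 := val_algebraMap_unit w δ
    have hl1le : w.valuation F lam₁ ≤ 1 := by
      rw [hlam₁, hd_def, show (1 : F) + algebraMap (𝓞 F) F (δ : 𝓞 F)
        = algebraMap (𝓞 F) F (1 + (δ : 𝓞 F)) by rw [map_add, map_one]]
      exact w.valuation_le_one _
    have hl2le : w.valuation F lam₂ ≤ 1 := by
      rw [hlam₂, hd_def, show (1 : F) - algebraMap (𝓞 F) F (δ : 𝓞 F)
        = algebraMap (𝓞 F) F (1 - (δ : 𝓞 F)) by rw [map_sub, map_one]]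
      exact w.valuation_le_one _
    have hprod : w.valuation F lam₁ * w.valuation F lam₂ = 1 := by
      rw [← Valuation.map_mul, hlam_eq]; exact hlamS w hw
    have h1 : w.valuation F lam₁ = 1 := eq_one_of_mul_eq_one hl1le hl2le hprod
    have h2' : w.valuation F lam₂ = 1 := eq_one_of_mul_eq_one hl2le hl1le (by
      rw [mul_comm] at hprod; exact hprod)
    constructor
    · rw [map_div₀, map_pow, Valuation.map_mul, h4F, Valuation.map_mul, hw2, hwd, h1]
      norm_num
    · rw [map_div₀, Valuation.map_neg, map_pow, Valuation.map_mul, h4F,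
        Valuation.map_mul, hw2, hwd, h2']
      norm_num
  -- valuations at v
  have hv2 : v.valuation F (algebraMap (𝓞 F) F 2)
      = ((Multiplicative.ofAdd (-1 : ℤ) : Multiplicative ℤ) : ℤₘ₀) := by
    rw [v.valuation_of_algebraMap, v.intValuation_singleton h2ne h2, WithZero.exp_eq_coe_ofAdd]
  have hvd : v.valuation F d = 1 := val_algebraMap_unit v δ
  have hl1ne : v.valuation F lam₁ ≠ 0 := by
    intro h
    have : ordAt v lam₁ = 0 := by rw [ordAt, dif_pos h]
    omega
  have hl2ne : v.valuation F lam₂ ≠ 0 := by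
    intro h
    have : ordAt v lam₂ = 0 := by rw [ordAt, dif_pos h]
    omega
  have hv1 : v.valuation F lam₁
      = ((Multiplicative.ofAdd (-((n : ℤ) - 1)) : Multiplicative ℤ) : ℤₘ₀) := by
    rw [ordAt_spec v hl1ne, hord₁]
  have hv2' : v.valuation F lam₂
      = ((Multiplicative.ofAdd (-(1 : ℤ)) : Multiplicative ℤ) : ℤₘ₀) := by
    rw [ordAt_spec v hl2ne, hord₂]
  have hordlam' : ordAt v (lam₁ ^ 2 / (4 * d)) = 2 * (n : ℤ) - 4 := by
    apply ordAt_eq_of_val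
    rw [map_div₀, map_pow, Valuation.map_mul, h4F, Valuation.map_mul, hv2, hvd, hv1, mul_one,
      ← WithZero.coe_mul, ← WithZero.coe_pow, ← WithZero.coe_div, WithZero.coe_inj,
      ← ofAdd_add, div_eq_mul_inv, ← ofAdd_neg, pow_two, ← ofAdd_add, ← ofAdd_add]
    first
    | rfl
    | (congr 1; ring)
  have hordmu' : ordAt v (-(lam₂ ^ 2) / (4 * d)) = 0 := by
    apply ordAt_eq_of_val
    rw [map_div₀, Valuation.map_neg, map_pow, Valuation.map_mul, h4F, Valuation.map_mul,
      hv2, hvd, hv2', mul_one,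
      ← WithZero.coe_mul, ← WithZero.coe_pow, ← WithZero.coe_div, WithZero.coe_inj,
      ← ofAdd_add, div_eq_mul_inv, ← ofAdd_neg, pow_two, ← ofAdd_add, ← ofAdd_add]
    first
    | rfl
    | (congr 1; ring)
  refine ⟨hsum', hpart2, ?_⟩
  rw [hordlam', hordmu']
  have hn' : (2 : ℤ) ≤ (n : ℤ) := by exact_mod_cast hn
  rw [abs_of_nonneg (by omega : (0:ℤ) ≤ 2 * (n:ℤ) - 4), abs_zero]
  exact max_eq_left (by omega)
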